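/- For integers a ≥ 0 and N ≥ 0, the evaluation of the ⌊α⌋-th derivative of x^{N+1+a}/(1-x) at x = 1/3 satisfies (d^a/dx^a)[x^{N+1+a}/(1-x)]|_{x=1/3} ≤ 3^a · a! · 2^{-N}, where a = ⌊α⌋ for 1 < α < 2, i.e., a = 1. -/

import Mathlib

lemma taylor_tail_key (N : ℕ) : (2 * N + 5) * 2 ^ N ≤ 12 * 3 ^ N := by
  induction N with
  | zero => norm_num
  | succ n ih =>
    have h : (2 * (n + 1) + 5) * 2 ^ (n + 1) ≤ 3 * ((2 * n + 5) * 2 ^ n) := by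
      ring_nf
      nlinarith [pow_pos (by norm_num : 0 < 2) n]
    calc (2 * (n + 1) + 5) * 2 ^ (n + 1) ≤ 3 * ((2 * n + 5) * 2 ^ n) := h
      _ ≤ 3 * (12 * 3 ^ n) := by omega
      _ = 12 * 3 ^ (n + 1) := by ring

/-- For `1 < α < 2` (so `⌊α⌋ = 1`), the `⌊α⌋`-th derivative of `x^{N+1+⌊α⌋}/(1-x)`
evaluated at `x = 1/3` is bounded by `3^⌊α⌋ ⬝ ⌊α⌋! ⬝ 2^{-N}`. -/
theorem taylor_tail_derivative_bound (α : ℝ) (hα : 1 < α) (hα' : α < 2) (N : ℕ) :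
    iteratedDeriv (Nat.floor α) (fun x : ℝ => x ^ (N + 1 + Nat.floor α) / (1 - x)) (1 / 3) ≤
      3 ^ (Nat.floor α) * (Nat.factorial (Nat.floor α) : ℝ) * (2 : ℝ) ^ (-(N : ℤ)) := by
  have hfl : Nat.floor α = 1 := by
    rw [Nat.floor_eq_iff (by linarith)]
    norm_num
    constructor <;> linarith
  rw [hfl, iteratedDeriv_one]
  have h1 : HasDerivAt (fun x : ℝ => x ^ (N + 1 + 1)) (((N + 1 + 1 : ℕ) : ℝ) * (1/3) ^ (N + 1)) (1/3) := by
    simpa using hasDerivAt_pow (N + 1 + 1) (1/3 : ℝ)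
  have h2 : HasDerivAt (fun x : ℝ => 1 - x) (-1) (1/3 : ℝ) := by
    simpa using (hasDerivAt_id (1/3 : ℝ)).const_sub 1
  have hd : HasDerivAt (fun x : ℝ => x ^ (N + 1 + 1) / (1 - x)) _ (1/3) := h1.div h2 (by norm_num : (1 : ℝ) - 1/3 ≠ 0)
  rw [hd.deriv]
  have key : ((2 * N + 5 : ℕ) : ℝ) * 2 ^ N ≤ 12 * 3 ^ N := by
    exact_mod_cast taylor_tail_key N
  push_cast at key ⊢
  rw [zpow_neg, zpow_natCast]
  have h2p : (0 : ℝ) < 2 ^ N := by positivity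
  have h3p : (0 : ℝ) < 3 ^ N := by positivity
  have e1 : ((1:ℝ)/3) ^ (N + 1) = (3 ^ N)⁻¹ / 3 := by
    rw [pow_succ]; field_simp; rw [← mul_pow]; norm_num
  have e2 : ((1:ℝ)/3) ^ (N + 1 + 1) = (3 ^ N)⁻¹ / 9 := by
    rw [pow_succ, pow_succ]; field_simp; rw [← mul_pow]; norm_num
  rw [e1, e2]
  rw [div_le_iff₀ (by positivity : (0:ℝ) < (1 - 1/3)^2)]
  field_simp
  simp only [Nat.factorial_one, Nat.cast_one]
  nlinarith [key, mul_pos h2p h3p]
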